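/- arXiv:1704.00213 — 14 statements merged into one kernel-verified Lean document; each statement's English description precedes it below -/
import Mathlib

section
/- A ring R is Yaqub nil-clean if and only if for every a in R, the element a^2 is strongly weakly nil-clean, i.e., a^2 - a^4 or a^2 + a^4 is nilpotent. -/
def YaqubNilClean (R : Type*) [Ring R] : Prop :=
  ∀ a : R, IsNilpotent (a + a ^ 3) ∨ IsNilpotent (a - a ^ 3)

private lemma nil_of_sq {R : Type*} [Ring R] {x : R} (h : IsNilpotent (x ^ 2)) :
    IsNilpotent x := by
  obtain ⟨n, hn⟩ := h
  exact ⟨2 * n, by rw [pow_mul, hn]⟩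

private lemma nil_mul {R : Type*} [Ring R] {x : R} (y : R) (hc : x * y = y * x)
    (h : IsNilpotent x) : IsNilpotent (x * y) :=
  Commute.isNilpotent_mul_right hc h

theorem stmt0 (R : Type*) [Ring R] :
    YaqubNilClean R ↔
      ∀ a : R, IsNilpotent (a ^ 2 - (a ^ 2) ^ 2) ∨ IsNilpotent (a ^ 2 + (a ^ 2) ^ 2) := by
  constructor
  · intro h a
    rcases h a with h1 | h1
    · right
      have := nil_mul a (by noncomm_ring) h1
      have he : (a + a ^ 3) * a = a ^ 2 + (a ^ 2) ^ 2 := by noncomm_ring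
      rwa [he] at this
    · left
      have := nil_mul a (by noncomm_ring) h1
      have he : (a - a ^ 3) * a = a ^ 2 - (a ^ 2) ^ 2 := by noncomm_ring
      rwa [he] at this
  · intro h a
    rcases h a with h1 | h1
    · right
      apply nil_of_sq
      have := nil_mul (1 - a ^ 2) (by noncomm_ring) h1
      have he : (a ^ 2 - (a ^ 2) ^ 2) * (1 - a ^ 2) = (a - a ^ 3) ^ 2 := by noncomm_ring
      rwa [he] at this
    · left
      apply nil_of_sq
      have := nil_mul (1 + a ^ 2) (by noncomm_ring) h1
      have he : (a ^ 2 + (a ^ 2) ^ 2) * (1 + a ^ 2) = (a + a ^ 3) ^ 2 := by noncomm_ring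
      rwa [he] at this
end

section
/- If R is a Yaqub nil-clean ring, then the Jacobson radical J(R) is a nil ideal. -/
private lemma isUnit_one_add_of_mem_jacobson {R : Type*} [Ring R] {y : R}
    (hy : y ∈ Ideal.jacobson (⊥ : Ideal R)) : IsUnit (1 + y) := by
  obtain ⟨s, hs⟩ := Ideal.exists_mul_add_sub_mem_of_mem_jacobson y hy
  rw [Ideal.mem_bot, sub_eq_zero] at hs
  -- hs : s * (y + 1) = 1
  have hs1 : s - 1 ∈ Ideal.jacobson (⊥ : Ideal R) := by
    have h' : s * y + s = 1 := by rw [mul_add, mul_one] at hs; exact hs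
    have : s - 1 = -(s * y) := by rw [← h']; abel
    rw [this]
    exact neg_mem (Ideal.mul_mem_left _ s hy)
  obtain ⟨t, ht⟩ := Ideal.exists_mul_sub_mem_of_sub_one_mem_jacobson s hs1
  rw [Ideal.mem_bot, sub_eq_zero] at ht
  -- ht : t * s = 1
  have hty : t = y + 1 := by
    calc t = t * (s * (y + 1)) := by rw [hs, mul_one]
      _ = t * s * (y + 1) := by rw [mul_assoc]
      _ = y + 1 := by rw [ht, one_mul]
  rw [add_comm]
  exact isUnit_iff_exists.mpr ⟨s, by rw [← hty, ht], hs⟩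

private lemma nilp_of_mul_unit {R : Type*} [Ring R] {x u : R} (hc : Commute x u)
    (hu : IsUnit u) (hn : IsNilpotent (x * u)) : IsNilpotent x := by
  obtain ⟨n, hn⟩ := hn
  refine ⟨n, ?_⟩
  have h1 : (x * u) ^ n = x ^ n * u ^ n := hc.mul_pow n
  have h2 : x ^ n * u ^ n = 0 := h1 ▸ hn
  obtain ⟨v, hv⟩ := hu.pow n
  calc x ^ n = x ^ n * u ^ n * (↑v⁻¹ : R) := by rw [← hv, Units.mul_inv_cancel_right]
    _ = 0 := by rw [h2, zero_mul]

theorem stmt1 (R : Type*) [Ring R] (h : YaqubNilClean R) :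
    ∀ x ∈ Ideal.jacobson (⊥ : Ideal R), IsNilpotent x := by
  intro x hx
  have hx2 : x * x ∈ Ideal.jacobson (⊥ : Ideal R) := Ideal.mul_mem_left _ x hx
  rcases h x with hn | hn
  · have hu : IsUnit (1 + x * x) := isUnit_one_add_of_mem_jacobson hx2
    have hc : Commute x (1 + x * x) :=
      (Commute.one_right x).add_right ((Commute.refl x).mul_right (Commute.refl x))
    have he : x + x ^ 3 = x * (1 + x * x) := by noncomm_ring
    exact nilp_of_mul_unit hc hu (he ▸ hn)
  · have hu : IsUnit (1 + -(x * x)) := isUnit_one_add_of_mem_jacobson (neg_mem hx2)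
    have hc : Commute x (1 + -(x * x)) :=
      (Commute.one_right x).add_right ((Commute.refl x).mul_right (Commute.refl x)).neg_right
    have he : x - x ^ 3 = x * (1 + -(x * x)) := by noncomm_ring
    exact nilp_of_mul_unit hc hu (he ▸ hn)
end

section
/- If R is a Yaqub nil-clean ring, then for every a in R the element a - a^5 is nilpotent. -/
theorem stmt2 (R : Type*) [Ring R] (h : YaqubNilClean R) :
    ∀ a : R, IsNilpotent (a - a ^ 5) := by
  intro a
  rcases h a with hn | hn
  · have e : a - a ^ 5 = (a + a ^ 3) * (1 - a ^ 2) := by noncomm_ring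
    rw [e]
    exact Commute.isNilpotent_mul_right (by unfold Commute SemiconjBy; noncomm_ring) hn
  · have e : a - a ^ 5 = (a - a ^ 3) * (1 + a ^ 2) := by noncomm_ring
    rw [e]
    exact Commute.isNilpotent_mul_right (by unfold Commute SemiconjBy; noncomm_ring) hn
end

section
/- A ring R is Yaqub nil-clean if and only if J(R) is nil and the quotient R/J(R) satisfies the identity x^3 = x or x^3 = -x for every element x (i.e., for each x in R, x^3 - x ∈ J(R) or x^3 + x ∈ J(R)). -/
section YaqubAux

variable {R : Type*} [Ring R]



/-- Jacobson's lemma for units. -/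
lemma unit_one_sub_comm {a b : R} (h : IsUnit (1 - a * b)) : IsUnit (1 - b * a) := by
  obtain ⟨u, hu⟩ := h
  set v : R := ↑u⁻¹ with hv
  have key : v * (1 - a * b) = 1 := by rw [← hu]; exact u.inv_mul
  have h2 : (1 - a * b) * v = 1 := by rw [← hu]; exact u.mul_inv
  have e1 : v - v * (a * b) = 1 := by rw [mul_sub, mul_one] at key; exact key
  have e2 : v - a * b * v = 1 := by rw [sub_mul, one_mul] at h2; exact h2
  have g1 : (1 + b * v * a) * (1 - b * a) = 1 := by
    calc (1 + b * v * a) * (1 - b * a)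
        = 1 - b * a + b * (v - v * (a * b)) * a := by noncomm_ring
      _ = 1 - b * a + b * 1 * a := by rw [e1]
      _ = 1 := by noncomm_ring
  have g2 : (1 - b * a) * (1 + b * v * a) = 1 := by
    calc (1 - b * a) * (1 + b * v * a)
        = 1 - b * a + b * (v - a * b * v) * a := by noncomm_ring
      _ = 1 - b * a + b * 1 * a := by rw [e2]
      _ = 1 := by noncomm_ring
  exact ⟨⟨1 - b * a, 1 + b * v * a, g2, g1⟩, rfl⟩

lemma left_inv_one_add_of_mem_jacobson {k : R}
    (hk : k ∈ Ideal.jacobson (⊥ : Ideal R)) : ∃ z : R, z * (1 + k) = 1 := by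
  obtain ⟨z, hz⟩ := Ideal.mem_jacobson_iff.mp hk 1
  rw [Ideal.mem_bot] at hz
  refine ⟨z, ?_⟩
  have : z * 1 * k + z - 1 = z * (1 + k) - 1 := by noncomm_ring
  rw [this] at hz
  exact sub_eq_zero.mp hz

lemma isUnit_one_add_of_mem_jacobson_s3 {j : R}
    (hj : j ∈ Ideal.jacobson (⊥ : Ideal R)) : IsUnit (1 + j) := by
  obtain ⟨z, hz1⟩ := left_inv_one_add_of_mem_jacobson hj
  have hzj : z - 1 ∈ Ideal.jacobson (⊥ : Ideal R) := by
    have hz' : z - 1 = -(z * j) := by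
      have : z * (1 + j) = z + z * j := by noncomm_ring
      rw [this] at hz1
      rw [← hz1]; abel
    rw [hz']
    exact neg_mem (Ideal.mul_mem_left _ z hj)
  obtain ⟨w, hw1⟩ := left_inv_one_add_of_mem_jacobson hzj
  rw [add_sub_cancel] at hw1
  have hwj : w = 1 + j := by
    calc w = w * (z * (1 + j)) := by rw [hz1, mul_one]
      _ = w * z * (1 + j) := by rw [mul_assoc]
      _ = 1 + j := by rw [hw1, one_mul]
  exact ⟨⟨1 + j, z, by rw [← hwj]; exact hw1, hz1⟩, rfl⟩

lemma mem_jacobson_bot_of_units {z : R}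
    (h : ∀ y : R, IsUnit (1 + y * z)) : z ∈ Ideal.jacobson (⊥ : Ideal R) := by
  refine Ideal.mem_jacobson_iff.mpr fun y => ?_
  obtain ⟨u, hu⟩ := h y
  refine ⟨↑u⁻¹, ?_⟩
  rw [Ideal.mem_bot]
  have key : (↑u⁻¹ : R) * (1 + y * z) = 1 := by rw [← hu]; exact u.inv_mul
  calc (↑u⁻¹ : R) * y * z + ↑u⁻¹ - 1 = ↑u⁻¹ * (1 + y * z) - 1 := by noncomm_ring
    _ = 0 := by rw [key]; exact sub_self 1




lemma idem_pow {x : R} (hx : x * x = x) (n : ℕ) : x ^ (n + 1) = x := by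
  induction n with
  | zero => rw [pow_one]
  | succ n ih => rw [pow_succ, ih, hx]

/-- binomial-style: `(1+w)^m = 1 + w*D` with `D` commuting with everything commuting with `w`. -/
lemma exists_one_add_pow (w t : R) (hc : Commute t w) (m : ℕ) :
    ∃ D : R, Commute w D ∧ Commute t D ∧ (1 + w) ^ m = 1 + w * D := by
  induction m with
  | zero => exact ⟨0, Commute.zero_right w, Commute.zero_right t, by simp⟩
  | succ m ih =>
    obtain ⟨D, hwD, htD, hD⟩ := ih
    refine ⟨1 + D + D * w, ?_, ?_, ?_⟩
    · exact ((Commute.one_right w).add_right hwD).add_right (hwD.mul_right (Commute.refl w))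
    · exact ((Commute.one_right t).add_right htD).add_right (htD.mul_right hc)
    · rw [pow_succ, hD]
      noncomm_ring
/-- From the Yaqub condition: some power of `t` is a multiple of a higher power. -/
lemma yaqub_descend (hY : YaqubNilClean R) (t : R) :
    ∃ (n : ℕ) (c : R), Commute t c ∧ t ^ (n + 1) = t ^ (n + 3) * c := by
  have key : ∀ (w : R), Commute t w → ∀ n : ℕ, (t * (1 + w)) ^ (n+1) = 0 →
      ∃ c : R, Commute t c ∧ t ^ (n + 1) * w * c = - t ^ (n+1) := by
    intro w hw n h0
    obtain ⟨D, hwD, htD, hD⟩ := exists_one_add_pow w t hw (n+1)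
    have hcm : Commute t (1 + w) := (Commute.one_right t).add_right hw
    have hmp : t ^ (n+1) * (1 + w) ^ (n+1) = 0 := by
      rw [← hcm.mul_pow]; exact h0
    rw [hD, mul_add, mul_one, ← mul_assoc] at hmp
    exact ⟨D, htD, by rw [add_comm] at hmp; exact eq_neg_of_add_eq_zero_left hmp⟩
  rcases hY t with h | h
  · obtain ⟨n0, hn0⟩ := h
    have hbump : (t * (1 + t * t)) ^ (n0 + 1) = 0 := by
      rw [show t * (1 + t * t) = t + t ^ 3 by noncomm_ring, pow_succ, hn0, zero_mul]
    obtain ⟨c, htc, hc⟩ := key (t * t) ((Commute.refl t).mul_right (Commute.refl t)) n0 hbump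
    refine ⟨n0, -c, htc.neg_right, ?_⟩
    have h13 : t ^ (n0 + 1) * (t * t) = t ^ (n0 + 3) := by
      rw [← mul_assoc, ← pow_succ, ← pow_succ]
    rw [h13] at hc
    rw [mul_neg, hc, neg_neg]
  · obtain ⟨n0, hn0⟩ := h
    have hbump : (t * (1 + -(t * t))) ^ (n0 + 1) = 0 := by
      rw [show t * (1 + -(t * t)) = t - t ^ 3 by noncomm_ring, pow_succ, hn0, zero_mul]
    obtain ⟨c, htc, hc⟩ := key (-(t * t))
      (((Commute.refl t).mul_right (Commute.refl t)).neg_right) n0 hbump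
    refine ⟨n0, c, htc, ?_⟩
    have h13 : t ^ (n0 + 1) * -(t * t) = -(t ^ (n0 + 3)) := by
      rw [mul_neg, ← mul_assoc, ← pow_succ, ← pow_succ]
    rw [h13, neg_mul, neg_eq_iff_eq_neg] at hc
    rw [← neg_neg (t ^ (n0+1)), ← hc]

lemma yaqub_idem (hY : YaqubNilClean R) (t : R) :
    ∃ (m : ℕ) (e w : R), e * e = e ∧ t ^ (m+1) * e = t ^ (m+1) ∧ e = t * w := by
  obtain ⟨n, c, htc, hrel⟩ := yaqub_descend hY t
  have iter : ∀ k, t ^ (n+1) = t ^ (n+1+2*k) * c ^ k := by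
    intro k; induction k with
    | zero => simp
    | succ k ih =>
      calc t^(n+1) = t^(n+1+2*k) * c^k := ih
        _ = t^(2*k) * t^(n+1) * c^k := by
            rw [show n+1+2*k = 2*k+(n+1) by omega, pow_add]
        _ = t^(2*k) * (t^(n+3) * c) * c^k := by rw [hrel]
        _ = t^(n+1+2*(k+1)) * c^(k+1) := by
            rw [← mul_assoc, ← pow_add, mul_assoc, ← pow_succ',
              show 2*k+(n+3) = n+1+2*(k+1) by omega]
  have key := iter (n+1)
  rw [show n+1+2*(n+1) = (n+1)*3 by omega, pow_mul] at key
  set u := t ^ (n+1) with hu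
  set h := c ^ (n+1) with hh
  have hcomm : Commute u h := htc.pow_pow (n+1) (n+1)
  have hh2 : h * (u * u) = (u * u) * h := (hcomm.symm.mul_right hcomm.symm).eq
  have hu3 : u * u * u * h = u := by
    rw [show u*u*u = u^3 by rw [pow_succ, pow_succ, pow_one], ← key]
  refine ⟨n, u * u * h, t^n * (u * h), ?_, ?_, ?_⟩
  · calc (u*u*h)*(u*u*h) = (u*u)*(h*(u*u))*h := by noncomm_ring
      _ = (u*u)*((u*u)*h)*h := by rw [hh2]
      _ = u*(u*u*u*h)*h := by noncomm_ring
      _ = u*u*h := by rw [hu3]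
  · calc u*(u*u*h) = u*u*u*h := by noncomm_ring
      _ = u := hu3
  · rw [show u * u * h = u * (u * h) by noncomm_ring, hu, pow_succ']
    rw [mul_assoc]

lemma ortho_smul_pow {x y : R} (hx : x * x = x) (hy : y * y = y) (hxy : x * y = 0)
    (hyx : y * x = 0) (α β : ℤ) (N : ℕ) :
    ((α • x : R) + β • y) ^ (N + 1) = (α ^ (N + 1)) • x + (β ^ (N + 1)) • y := by
  induction N with
  | zero => simp
  | succ N ih =>
    rw [pow_succ, ih, add_mul, mul_add, mul_add, smul_mul_smul_comm, smul_mul_smul_comm,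
      smul_mul_smul_comm, smul_mul_smul_comm, hx, hy, hxy, hyx, smul_zero, smul_zero,
      add_zero, zero_add, ← pow_succ, ← pow_succ]

lemma sq_zero_nilpotent_mul (hY : YaqubNilClean R) {z : R} (hz : z * z = 0) (r : R) :
    IsNilpotent (z * r) := by
  obtain ⟨t, ht⟩ : ∃ t, t = z * r := ⟨_, rfl⟩
  rw [show z * r = t from ht.symm]
  obtain ⟨m, e, w, he, hue, hew⟩ := yaqub_idem hY t
  have hzt : z * t = 0 := by rw [ht, ← mul_assoc, hz, zero_mul]
  have hze : z * e = 0 := by rw [hew, ← mul_assoc, hzt, zero_mul]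
  have hey : e = z * (r * w) := by rw [hew, ht, mul_assoc]
  suffices he0 : e = 0 by
    exact ⟨m + 1, by rw [← hue, he0, mul_zero]⟩
  obtain ⟨y, hy⟩ : ∃ y, y = (r * w) * e := ⟨_, rfl⟩
  have hzy : z * y = e := by rw [hy, ← mul_assoc, ← hey, he]
  have hye : y * e = y := by rw [hy, mul_assoc, he]
  obtain ⟨f, hf⟩ : ∃ f, f = y * z := ⟨_, rfl⟩
  have hff : f * f = f := by
    calc f * f = y * ((z * y) * z) := by rw [hf]; noncomm_ring
      _ = y * (e * z) := by rw [hzy]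
      _ = (y * e) * z := by noncomm_ring
      _ = f := by rw [hye, hf]
  have rfe : f * e = 0 := by rw [hf, mul_assoc, hze, mul_zero]
  obtain ⟨F, hF⟩ : ∃ F, F = f - e * f := ⟨_, rfl⟩
  obtain ⟨p, hp⟩ : ∃ p, p = e * z := ⟨_, rfl⟩
  obtain ⟨q, hq⟩ : ∃ q, q = F * y := ⟨_, rfl⟩
  -- basic relations
  have reF : e * F = 0 := by rw [hF, mul_sub, ← mul_assoc, he, sub_self]
  have rFe : F * e = 0 := by
    rw [hF, sub_mul, rfe, mul_assoc, rfe, mul_zero, sub_zero]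
  have rFF : F * F = F := by
    calc F * F = f * f - (f * e) * f - e * (f * f) + e * ((f * e) * f) := by
          rw [hF]; noncomm_ring
      _ = f - e * f := by rw [hff, rfe, zero_mul, mul_zero, add_zero, sub_zero]
      _ = F := by rw [hF]
  have ryF : y * F = 0 := by rw [hF, mul_sub, ← mul_assoc, hye, sub_self]
  have rzF : z * F = p := by
    rw [hF, mul_sub, ← mul_assoc, hze, zero_mul, sub_zero, hf, ← mul_assoc, hzy, hp]
  have rep : e * p = p := by rw [hp, ← mul_assoc, he]
  have rpe : p * e = 0 := by rw [hp, mul_assoc, hze, mul_zero]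
  have rpp : p * p = 0 := by
    calc p * p = e * ((z * e) * z) := by rw [hp]; noncomm_ring
      _ = 0 := by rw [hze, zero_mul, mul_zero]
  have rpf : p * f = p := by
    calc p * f = e * ((z * y) * z) := by rw [hp, hf]; noncomm_ring
      _ = (e * e) * z := by rw [hzy]; noncomm_ring
      _ = p := by rw [he, hp]
  have rpF : p * F = p := by
    rw [hF, mul_sub, ← mul_assoc, rpe, zero_mul, sub_zero, rpf]
  have rfp : f * p = 0 := by
    calc f * p = y * ((z * e) * z) := by rw [hf, hp]; noncomm_ring
      _ = 0 := by rw [hze, zero_mul, mul_zero]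
  have rFp : F * p = 0 := by
    rw [hF, sub_mul, rfp, mul_assoc, rfp, mul_zero, sub_zero]
  have req : e * q = 0 := by rw [hq, ← mul_assoc, reF, zero_mul]
  have rqe : q * e = q := by rw [hq, mul_assoc, hye]
  have rFq : F * q = q := by rw [hq, ← mul_assoc, rFF]
  have rqF : q * F = 0 := by rw [hq, mul_assoc, ryF, mul_zero]
  have rqq : q * q = 0 := by
    calc q * q = F * ((y * F) * y) := by rw [hq]; noncomm_ring
      _ = 0 := by rw [ryF, zero_mul, mul_zero]
  have rpq : p * q = e := by
    calc p * q = e * ((z * F) * y) := by rw [hp, hq]; noncomm_ring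
      _ = e * (p * y) := by rw [rzF]
      _ = (e * e) * (z * y) := by rw [hp]; noncomm_ring
      _ = e := by rw [he, hzy, he]
  have rFf : F * f = F := by
    rw [hF, sub_mul, hff, mul_assoc, hff, ← hF]
  have rqp : q * p = F := by
    calc q * p = F * ((y * e) * z) := by rw [hq, hp]; noncomm_ring
      _ = F * f := by rw [hye, hf]
      _ = F := rFf
  -- product identities
  have P1 : (e + p + q) * (e + p + q) = e + e + F + p + q := by
    simp only [mul_add, add_mul, mul_sub, sub_mul, he, reF, rep, req, rFe, rFF, rFp, rFq, rpe, rpF, rpp, rpq, rqe, rqF, rqp, rqq, add_zero, zero_add, sub_zero, zero_sub, mul_zero, zero_mul]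
    try abel
  have P2 : (e + e + F + p + q) * (e + p + q) = e + e + e + F + p + p + q + q := by
    simp only [mul_add, add_mul, mul_sub, sub_mul, he, reF, rep, req, rFe, rFF, rFp, rFq, rpe, rpF, rpp, rpq, rqe, rqF, rqp, rqq, add_zero, zero_add, sub_zero, zero_sub, mul_zero, zero_mul]
    try abel
  have P3 : (e + e + F + p + q) * (e + F + F - p - q) = e + F := by
    simp only [mul_add, add_mul, mul_sub, sub_mul, he, reF, rep, req, rFe, rFF, rFp, rFq, rpe, rpF, rpp, rpq, rqe, rqF, rqp, rqq, add_zero, zero_add, sub_zero, zero_sub, mul_zero, zero_mul]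
    try abel
  have P4 : (e + F + F - p - q) * (e + e + F + p + q) = e + F := by
    simp only [mul_add, add_mul, mul_sub, sub_mul, he, reF, rep, req, rFe, rFF, rFp, rFq, rpe, rpF, rpp, rpq, rqe, rqF, rqp, rqq, add_zero, zero_add, sub_zero, zero_sub, mul_zero, zero_mul]
    try abel
  have P5 : (e+e+e+e+F+p+p+p+q+q+q) * (e+F+F+F+F-p-p-p-q-q-q) = (-5 : ℤ) • (e + F) := by
    simp only [mul_add, add_mul, mul_sub, sub_mul, he, reF, rep, req, rFe, rFF, rFp, rFq, rpe, rpF, rpp, rpq, rqe, rqF, rqp, rqq, add_zero, zero_add, sub_zero, zero_sub, mul_zero, zero_mul]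
    try abel
  have P6 : (e+F+F+F+F-p-p-p-q-q-q) * (e+e+e+e+F+p+p+p+q+q+q) = (-5 : ℤ) • (e + F) := by
    simp only [mul_add, add_mul, mul_sub, sub_mul, he, reF, rep, req, rFe, rFF, rFp, rFq, rpe, rpF, rpp, rpq, rqe, rqF, rqp, rqq, add_zero, zero_add, sub_zero, zero_sub, mul_zero, zero_mul]
    try abel
  have P7 : (e + F) * (e + F) = e + F := by
    simp only [mul_add, add_mul, mul_sub, sub_mul, he, reF, rep, req, rFe, rFF, rFp, rFq, rpe, rpF, rpp, rpq, rqe, rqF, rqp, rqq, add_zero, zero_add, sub_zero, zero_sub, mul_zero, zero_mul]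
    try abel
  have P8 : e * (e + F) = e := by
    rw [mul_add, he, reF, add_zero]
  have P9 : (e + F + F) * (e + F + F) = e + F + F + F + F := by
    simp only [mul_add, add_mul, mul_sub, sub_mul, he, reF, rep, req, rFe, rFF, rFp, rFq, rpe, rpF, rpp, rpq, rqe, rqF, rqp, rqq, add_zero, zero_add, sub_zero, zero_sub, mul_zero, zero_mul]
    try abel
  have P10 : (e + F + F + F + F) * (e + F + F) = e + F+F+F+F+F+F+F+F := by
    simp only [mul_add, add_mul, mul_sub, sub_mul, he, reF, rep, req, rFe, rFF, rFp, rFq, rpe, rpF, rpp, rpq, rqe, rqF, rqp, rqq, add_zero, zero_add, sub_zero, zero_sub, mul_zero, zero_mul]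
    try abel
  have hcube1 : (e + p + q)^3 = e+e+e+F+p+p+q+q := by rw [pow_three', P1, P2]
  have hcube4 : (e + F + F)^3 = e+F+F+F+F+F+F+F+F := by rw [pow_three', P9, P10]
  rcases hY (e + p + q) with hc | hc
  · rw [show (e+p+q) + (e+p+q)^3 = (e+e+e+e+F+p+p+p+q+q+q) by rw [hcube1]; abel] at hc
    obtain ⟨N, hN⟩ := hc
    have hN1 : (e+e+e+e+F+p+p+p+q+q+q)^(N+1) = 0 := by rw [pow_succ, hN, zero_mul]
    have hcm : Commute (e+e+e+e+F+p+p+p+q+q+q) (e+F+F+F+F-p-p-p-q-q-q) := P5.trans P6.symm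
    have h0 : ((-5:ℤ) • (e+F))^(N+1) = 0 := by
      rw [← P5, hcm.mul_pow, hN1, zero_mul]
    rw [smul_pow, idem_pow P7] at h0
    have h5e : ((-5:ℤ)^(N+1)) • e = 0 := by
      calc ((-5:ℤ)^(N+1)) • e = ((-5:ℤ)^(N+1)) • (e * (e+F)) := by rw [P8]
        _ = e * (((-5:ℤ)^(N+1)) • (e+F)) := (mul_smul_comm _ _ _).symm
        _ = 0 := by rw [h0, mul_zero]
    have h5e' : ((5:ℤ)^(N+1)) • e = 0 := by
      have hs : (5:ℤ)^(N+1) = (-1)^(N+1) * (-5)^(N+1) := by rw [← mul_pow]; norm_num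
      rw [hs, mul_smul, h5e, smul_zero]
    rcases hY (e + F + F) with hc4 | hc4
    · rw [show (e+F+F) + (e+F+F)^3 = (2:ℤ)•e + (10:ℤ)•F by rw [hcube4]; abel] at hc4
      obtain ⟨M, hM⟩ := hc4
      have hM1 : ((2:ℤ)•(e:R) + (10:ℤ)•F)^(M+1) = 0 := by rw [pow_succ, hM, zero_mul]
      rw [ortho_smul_pow he rFF reF rFe] at hM1
      have h2e : ((2:ℤ)^(M+1)) • e = 0 := by
        calc ((2:ℤ)^(M+1)) • e = e * (((2:ℤ)^(M+1))•e + ((10:ℤ)^(M+1))•F) := by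
              rw [mul_add, mul_smul_comm, mul_smul_comm, he, reF, smul_zero, add_zero]
          _ = 0 := by rw [hM1, mul_zero]
      have hcp : IsCoprime ((5:ℤ)^(N+1)) ((2:ℤ)^(M+1)) :=
        IsCoprime.pow (Int.isCoprime_iff_gcd_eq_one.mpr (by decide))
      obtain ⟨A, B2, hAB⟩ := hcp
      calc e = ((1:ℤ)) • e := (one_smul ℤ e).symm
        _ = (A * (5:ℤ)^(N+1) + B2 * (2:ℤ)^(M+1)) • e := by rw [hAB]
        _ = A • (((5:ℤ)^(N+1)) • e) + B2 • (((2:ℤ)^(M+1)) • e) := by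
              rw [add_smul, mul_smul, mul_smul]
        _ = 0 := by rw [h5e', h2e, smul_zero, smul_zero, add_zero]
    · rw [show (e+F+F) - (e+F+F)^3 = (-6:ℤ)•F by rw [hcube4]; abel] at hc4
      obtain ⟨M, hM⟩ := hc4
      have hM1 : ((-6:ℤ)•F)^(M+1) = 0 := by rw [pow_succ, hM, zero_mul]
      rw [smul_pow, idem_pow rFF] at hM1
      have h6e : ((-6:ℤ)^(M+1)) • e = 0 := by
        calc ((-6:ℤ)^(M+1)) • e = ((-6:ℤ)^(M+1)) • (p * q) := by rw [rpq]
          _ = ((-6:ℤ)^(M+1)) • (p * (F * q)) := by rw [rFq]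
          _ = p * (((-6:ℤ)^(M+1)) • (F * q)) := by rw [mul_smul_comm]
          _ = p * ((((-6:ℤ)^(M+1)) • F) * q) := by rw [smul_mul_assoc]
          _ = 0 := by rw [hM1, zero_mul, mul_zero]
      have h6e' : ((6:ℤ)^(M+1)) • e = 0 := by
        have hs : (6:ℤ)^(M+1) = (-1)^(M+1) * (-6)^(M+1) := by rw [← mul_pow]; norm_num
        rw [hs, mul_smul, h6e, smul_zero]
      have hcp : IsCoprime ((5:ℤ)^(N+1)) ((6:ℤ)^(M+1)) :=
        IsCoprime.pow (Int.isCoprime_iff_gcd_eq_one.mpr (by decide))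
      obtain ⟨A, B2, hAB⟩ := hcp
      calc e = ((1:ℤ)) • e := (one_smul ℤ e).symm
        _ = (A * (5:ℤ)^(N+1) + B2 * (6:ℤ)^(M+1)) • e := by rw [hAB]
        _ = A • (((5:ℤ)^(N+1)) • e) + B2 • (((6:ℤ)^(M+1)) • e) := by
              rw [add_smul, mul_smul, mul_smul]
        _ = 0 := by rw [h5e', h6e', smul_zero, smul_zero, add_zero]
  · rw [show (e+p+q) - (e+p+q)^3 = -(e+e+F+p+q) by rw [hcube1]; abel] at hc
    have hc' : IsNilpotent (e+e+F+p+q) := by simpa using hc.neg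
    obtain ⟨N, hN⟩ := hc'
    have hN1 : (e+e+F+p+q)^(N+1) = 0 := by rw [pow_succ, hN, zero_mul]
    have hcm : Commute (e+e+F+p+q) (e+F+F-p-q) := P3.trans P4.symm
    have hEF : e + F = 0 := by
      calc e + F = (e+F)^(N+1) := (idem_pow P7 N).symm
        _ = ((e+e+F+p+q)*(e+F+F-p-q))^(N+1) := by rw [P3]
        _ = (e+e+F+p+q)^(N+1) * (e+F+F-p-q)^(N+1) := hcm.mul_pow _
        _ = 0 := by rw [hN1, zero_mul]
    rw [← P8, hEF, mul_zero]

lemma sq_zero_mem_jacobson (hY : YaqubNilClean R) {z : R} (hz : z * z = 0) :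
    z ∈ Ideal.jacobson (⊥ : Ideal R) := by
  apply mem_jacobson_bot_of_units
  intro y
  have h1 : IsUnit (1 + z * y) := (sq_zero_nilpotent_mul hY hz y).isUnit_one_add
  have h2 : IsUnit (1 - z * (-y)) := by rwa [mul_neg, sub_neg_eq_add]
  have h3 : IsUnit (1 - (-y) * z) := unit_one_sub_comm h2
  rwa [neg_mul, sub_neg_eq_add] at h3

lemma asIdeal_bot : TwoSidedIdeal.asIdeal (⊥ : TwoSidedIdeal R) = ⊥ := by
  ext x
  rw [TwoSidedIdeal.mem_asIdeal, TwoSidedIdeal.mem_bot, Ideal.mem_bot]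

lemma sq_mem_jacobson (hY : YaqubNilClean R) {z : R}
    (hzz : z * z ∈ Ideal.jacobson (⊥ : Ideal R)) : z ∈ Ideal.jacobson (⊥ : Ideal R) := by
  let tJ : TwoSidedIdeal R := TwoSidedIdeal.jacobson ⊥
  have hmem : ∀ x : R, x ∈ tJ ↔ x ∈ Ideal.jacobson (⊥ : Ideal R) := by
    intro x
    rw [← TwoSidedIdeal.mem_asIdeal, TwoSidedIdeal.asIdeal_jacobson, asIdeal_bot]
  let π : R →+* tJ.ringCon.Quotient := tJ.ringCon.mk'
  have hπsurj : Function.Surjective π := fun x => Quotient.inductionOn' x (fun a => ⟨a, rfl⟩)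
  have hker : ∀ x : R, π x = 0 ↔ x ∈ Ideal.jacobson (⊥ : Ideal R) := by
    intro x
    rw [← hmem]
    have h1 : π x = 0 ↔ tJ.ringCon x 0 := by
      rw [← RingCon.coe_zero]
      exact RingCon.eq tJ.ringCon
    rw [h1]
    exact (TwoSidedIdeal.mem_iff tJ x).symm
  have hYS : YaqubNilClean tJ.ringCon.Quotient := by
    intro a
    obtain ⟨x, rfl⟩ := hπsurj a
    rcases hY x with h | h
    · left
      have := h.map π
      rwa [map_add, map_pow] at this
    · right
      have := h.map π
      rwa [map_sub, map_pow] at this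
  have hmapJ : Ideal.map π (Ideal.jacobson (⊥ : Ideal R)) = ⊥ := by
    refine le_antisymm (Ideal.map_le_iff_le_comap.mpr fun x hx => ?_) bot_le
    rw [Ideal.mem_comap, Ideal.mem_bot]
    exact (hker x).mpr hx
  have hJS : Ideal.jacobson (⊥ : Ideal tJ.ringCon.Quotient) = ⊥ := by
    have hkerle : RingHom.ker π ≤ Ideal.jacobson (⊥ : Ideal R) := fun x hx =>
      (hker x).mp (RingHom.mem_ker.mp hx)
    have hmj := Ideal.map_jacobson_of_surjective (I := Ideal.jacobson (⊥ : Ideal R)) hπsurj hkerle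
    rw [Ideal.jacobson_idem, hmapJ] at hmj
    exact hmj.symm
  have hz2 : π z * π z = 0 := by rw [← map_mul]; exact (hker _).mpr hzz
  have hmemS := sq_zero_mem_jacobson hYS hz2
  rw [hJS, Ideal.mem_bot] at hmemS
  exact (hker z).mp hmemS

lemma nilpotent_mem_jacobson (hY : YaqubNilClean R) {z : R} (hz : IsNilpotent z) :
    z ∈ Ideal.jacobson (⊥ : Ideal R) := by
  have main : ∀ (j : ℕ) (x : R), x ^ (2^j) ∈ Ideal.jacobson (⊥ : Ideal R) →
      x ∈ Ideal.jacobson (⊥ : Ideal R) := by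
    intro j
    induction j with
    | zero => intro x hx; rwa [Nat.pow_zero, pow_one] at hx
    | succ j ih =>
      intro x hx
      have hxx : (x * x) ^ (2^j) ∈ Ideal.jacobson (⊥ : Ideal R) := by
        rw [← pow_two, ← pow_mul]
        rwa [show 2 * 2^j = 2^(j+1) by rw [pow_succ, Nat.mul_comm]]
      exact sq_mem_jacobson hY (ih _ hxx)
  obtain ⟨n, hn⟩ := hz
  apply main n z
  have h2n : z ^ (2^n) = 0 := by
    have hle : n ≤ 2^n := (Nat.lt_two_pow_self (n := n)).le
    rw [show 2^n = n + (2^n - n) by omega, pow_add, hn, zero_mul]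
  rw [h2n]
  exact zero_mem _

end YaqubAux

theorem stmt3 (R : Type*) [Ring R] :
    YaqubNilClean R ↔
      (∀ x ∈ Ideal.jacobson (⊥ : Ideal R), IsNilpotent x) ∧
        ∀ x : R, x ^ 3 - x ∈ Ideal.jacobson (⊥ : Ideal R) ∨
          x ^ 3 + x ∈ Ideal.jacobson (⊥ : Ideal R) := by
  constructor
  · intro hY
    refine ⟨fun x hx => ?_, fun x => ?_⟩
    · have hx2 : x * x ∈ Ideal.jacobson (⊥ : Ideal R) := Ideal.mul_mem_left _ x hx
      have hu1 : IsUnit (1 + x * x) := isUnit_one_add_of_mem_jacobson_s3 hx2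
      have hu2 : IsUnit (1 - x * x) := by
        have := isUnit_one_add_of_mem_jacobson_s3 (neg_mem hx2)
        rwa [← sub_eq_add_neg] at this
      rcases hY x with h | h
      · obtain ⟨n, hn⟩ := h
        have hfac : x + x ^ 3 = x * (1 + x * x) := by noncomm_ring
        have hcm : Commute x (1 + x * x) :=
          (Commute.one_right x).add_right ((Commute.refl x).mul_right (Commute.refl x))
        have hxn : x ^ n * (1 + x * x) ^ n = 0 := by rw [← hcm.mul_pow, ← hfac, hn]
        obtain ⟨v, hv⟩ := (hu1.pow n).exists_right_inv
        refine ⟨n, ?_⟩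
        calc x ^ n = x ^ n * ((1 + x * x) ^ n * v) := by rw [hv, mul_one]
          _ = (x ^ n * (1 + x * x) ^ n) * v := by rw [mul_assoc]
          _ = 0 := by rw [hxn, zero_mul]
      · obtain ⟨n, hn⟩ := h
        have hfac : x - x ^ 3 = x * (1 - x * x) := by noncomm_ring
        have hcm : Commute x (1 - x * x) :=
          (Commute.one_right x).sub_right ((Commute.refl x).mul_right (Commute.refl x))
        have hxn : x ^ n * (1 - x * x) ^ n = 0 := by rw [← hcm.mul_pow, ← hfac, hn]
        obtain ⟨v, hv⟩ := (hu2.pow n).exists_right_inv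
        refine ⟨n, ?_⟩
        calc x ^ n = x ^ n * ((1 - x * x) ^ n * v) := by rw [hv, mul_one]
          _ = (x ^ n * (1 - x * x) ^ n) * v := by rw [mul_assoc]
          _ = 0 := by rw [hxn, zero_mul]
    · rcases hY x with h | h
      · right
        apply nilpotent_mem_jacobson hY
        rwa [add_comm] at h
      · left
        apply nilpotent_mem_jacobson hY
        have h2 := h.neg
        rwa [neg_sub] at h2
  · rintro ⟨hJn, hx⟩ a
    rcases hx a with h | h
    · right
      have h2 := (hJn _ h).neg
      rwa [neg_sub] at h2
    · left
      have h2 := hJn _ h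
      rwa [add_comm] at h2
end

section
/- If R and S are rings such that the product ring R × S is Yaqub nil-clean, then both R and S are Yaqub nil-clean, and at least one of R, S is strongly 2-nil-clean. -/
private lemma nil_fst {R S : Type*} [Ring R] [Ring S] {x : R × S}
    (h : IsNilpotent x) : IsNilpotent x.1 := by
  obtain ⟨n, hn⟩ := h
  exact ⟨n, by simpa using congrArg Prod.fst hn⟩

private lemma nil_snd {R S : Type*} [Ring R] [Ring S] {x : R × S}
    (h : IsNilpotent x) : IsNilpotent x.2 := by
  obtain ⟨n, hn⟩ := h
  exact ⟨n, by simpa using congrArg Prod.snd hn⟩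

theorem stmt6 (R S : Type*) [Ring R] [Ring S] (h : YaqubNilClean (R × S)) :
    YaqubNilClean R ∧ YaqubNilClean S ∧
      ((∀ a : R, IsNilpotent (a - a ^ 3)) ∨ (∀ b : S, IsNilpotent (b - b ^ 3))) := by
  refine ⟨fun a => ?_, fun b => ?_, ?_⟩
  · rcases h (a, (0 : S)) with hx | hx
    · exact Or.inl (by simpa using nil_fst hx)
    · exact Or.inr (by simpa using nil_fst hx)
  · rcases h ((0 : R), b) with hx | hx
    · exact Or.inl (by simpa using nil_snd hx)
    · exact Or.inr (by simpa using nil_snd hx)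
  · by_contra hc
    push_neg at hc
    obtain ⟨⟨a, ha⟩, ⟨b, hb⟩⟩ := hc
    -- from (a, 1): 2 is nilpotent in S
    have h2 : IsNilpotent (2 : S) := by
      rcases h (a, (1 : S)) with hx | hx
      · have := nil_snd hx
        simpa [one_add_one_eq_two] using this
      · exact absurd (by simpa using nil_fst hx) ha
    -- b + b^3 is nilpotent
    have hbp : IsNilpotent (b + b ^ 3) := by
      rcases h ((0 : R), b) with hx | hx
      · simpa using nil_snd hx
      · exact absurd (by simpa using nil_snd hx) hb
    -- 2 * b^3 is nilpotent
    have h2b : IsNilpotent (2 * b ^ 3) :=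
      (Commute.ofNat_left 2 (b ^ 3)).isNilpotent_mul_right h2
    -- b - b^3 = (b + b^3) - 2 * b^3
    have hcomm : Commute (b + b ^ 3) (2 * b ^ 3) := by
      have h1 : Commute b (b ^ 3) := (Commute.refl b).pow_right 3
      have h2' : Commute b (2 : S) := Commute.ofNat_right b 2
      have h3 : Commute (b ^ 3) (2 : S) := Commute.ofNat_right _ 2
      exact (h2'.mul_right h1).add_left ((h3.mul_right (Commute.refl _)))
    have : IsNilpotent (b - b ^ 3) := by
      have := hcomm.isNilpotent_sub hbp h2b
      have heq : b + b ^ 3 - 2 * b ^ 3 = b - b ^ 3 := by rw [two_mul]; abel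
      rwa [heq] at this
    exact hb this
end

section
/- Let I be a nil (two-sided) ideal of a ring R. Then R is Yaqub nil-clean if and only if R/I is Yaqub nil-clean. -/
theorem stmt8 (R : Type*) [Ring R] (I : TwoSidedIdeal R)
    (hI : ∀ x ∈ I, IsNilpotent x) :
    YaqubNilClean R ↔ YaqubNilClean I.ringCon.Quotient := by
  set f : R →+* I.ringCon.Quotient := I.ringCon.mk'
  have hsurj : Function.Surjective f := Quotient.mk''_surjective
  have hker : ∀ x : R, f x = 0 → IsNilpotent x := by
    intro x hx
    apply hI
    have : I.ringCon x 0 := Quotient.eq''.mp hx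
    simpa using I.rel_iff x 0 |>.mp this
  constructor
  · intro h a
    obtain ⟨b, rfl⟩ := hsurj a
    rcases h b with hb | hb
    · left
      have := hb.map f
      simpa using this
    · right
      have := hb.map f
      simpa using this
  · intro h a
    rcases h (f a) with hb | hb
    · left
      obtain ⟨n, hn⟩ := hb
      have : f ((a + a ^ 3) ^ n) = 0 := by simpa using hn
      obtain ⟨m, hm⟩ := hker _ this
      exact ⟨n * m, by rw [pow_mul, hm]⟩
    · right
      obtain ⟨n, hn⟩ := hb
      have : f ((a - a ^ 3) ^ n) = 0 := by simpa using hn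
      obtain ⟨m, hm⟩ := hker _ this
      exact ⟨n * m, by rw [pow_mul, hm]⟩
end

section
/- If R is a Yaqub nil-clean ring, then 30 is nilpotent in R; more precisely, either 6 or 10 is nilpotent in R. -/
theorem stmt9 (R : Type*) [Ring R] (h : YaqubNilClean R) :
    IsNilpotent (30 : R) ∧ (IsNilpotent (6 : R) ∨ IsNilpotent (10 : R)) := by
  have h2 := h 2
  have key : IsNilpotent (6 : R) ∨ IsNilpotent (10 : R) := by
    rcases h2 with h10 | h6
    · right; convert h10 using 1; norm_num
    · left
      have : ((2 : R) - 2 ^ 3) = -6 := by norm_num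
      rw [this] at h6
      simpa using h6.neg
  refine ⟨?_, key⟩
  rcases key with h6 | h10
  · have : (30 : R) = 6 * 5 := by norm_num
    rw [this]
    exact (by norm_num [Commute, SemiconjBy] : Commute _ _).isNilpotent_mul_right h6
  · have : (30 : R) = 10 * 3 := by norm_num
    rw [this]
    exact (by norm_num [Commute, SemiconjBy] : Commute _ _).isNilpotent_mul_right h10
end

section
/- A ring R is strongly 2-nil-clean if and only if 6 is nilpotent in R and R is Yaqub nil-clean. -/
open Polynomial

theorem stmt10 (R : Type*) [Ring R] :
    (∀ a : R, IsNilpotent (a - a ^ 3)) ↔ IsNilpotent (6 : R) ∧ YaqubNilClean R := by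
  constructor
  · intro h
    refine ⟨?_, fun a => Or.inr (h a)⟩
    have h2 := h 2
    have e : (2 : R) - 2 ^ 3 = -6 := by norm_num
    rw [e] at h2
    simpa using h2.neg
  · rintro ⟨h6, hY⟩ a
    rcases hY a with hp | h
    · -- hard case
      set φ : ℤ[X] →ₐ[ℤ] R := Polynomial.aeval a with hφ
      have key : ∀ p q : ℤ[X], Commute (φ p) (φ q) := by
        intro p q
        simp only [Commute, SemiconjBy, ← map_mul, mul_comm]
      have hmul : ∀ {p : ℤ[X]} (q : ℤ[X]), IsNilpotent (φ p) → IsNilpotent (φ (p * q)) := by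
        intro p q h
        rw [map_mul]
        exact (key p q).isNilpotent_mul_right h
      have hsub : ∀ {p q : ℤ[X]}, IsNilpotent (φ p) → IsNilpotent (φ q) →
          IsNilpotent (φ (p - q)) := by
        intro p q h1 h2
        rw [map_sub]
        exact (key p q).isNilpotent_sub h1 h2
      have h6' : IsNilpotent (φ 6) := by rw [map_ofNat]; exact h6
      have hp' : IsNilpotent (φ (X + X ^ 3)) := by simpa [hφ] using hp
      -- 3(a - a^3) nilpotent
      have N1 : IsNilpotent (φ (3 * (X - X ^ 3))) := by
        have e : (3 * (X - X ^ 3) : ℤ[X]) = (X + X ^ 3) * 3 - 6 * X ^ 3 := by ring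
        rw [e]
        exact hsub (hmul 3 hp') (hmul (X ^ 3) h6')
      suffices h2 : IsNilpotent (φ (X - X ^ 3)) by simpa [hφ] using h2
      rcases hY (1 + a) with hc | hc
      · -- case c + c^3 nilpotent
        have hc' : IsNilpotent (φ ((1 + X) + (1 + X) ^ 3)) := by simpa [hφ] using hc
        have M2 : IsNilpotent (φ (2 + 3 * X + 3 * X ^ 2)) := by
          have e : (2 + 3 * X + 3 * X ^ 2 : ℤ[X]) =
              ((1 + X) + (1 + X) ^ 3) - (X + X ^ 3) := by ring
          rw [e]; exact hsub hc' hp'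
        have M3 : IsNilpotent (φ 4) := by
          have e : (4 : ℤ[X]) = (2 + 3 * X + 3 * X ^ 2) * 2 - 6 * (X + X ^ 2) := by ring
          rw [e]; exact hsub (hmul 2 M2) (hmul (X + X ^ 2) h6')
        have e : (X - X ^ 3 : ℤ[X]) = 4 * (X - X ^ 3) - 3 * (X - X ^ 3) * 1 := by ring
        rw [e]
        exact hsub (hmul (X - X ^ 3) M3) (hmul 1 N1)
      · -- case c - c^3 nilpotent
        have hc' : IsNilpotent (φ ((1 + X) - (1 + X) ^ 3)) := by simpa [hφ] using hc
        have N2 : IsNilpotent (φ (X + 3 * X ^ 2)) := by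
          have e : (X + 3 * X ^ 2 : ℤ[X]) =
              (0 - ((1 + X) - (1 + X) ^ 3)) - (X + X ^ 3) := by ring
          rw [e]
          exact hsub (hsub (by simp) hc') hp'
        have N3 : IsNilpotent (φ (2 * X)) := by
          have e : (2 * X : ℤ[X]) = (X + 3 * X ^ 2) * 2 - 6 * X ^ 2 := by ring
          rw [e]; exact hsub (hmul 2 N2) (hmul (X ^ 2) h6')
        have e : (X - X ^ 3 : ℤ[X]) = 3 * (X - X ^ 3) * 1 - (2 * X) * (1 - X ^ 2) := by ring
        rw [e]
        exact hsub (hmul 1 N1) (hmul (1 - X ^ 2) N3)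
    · exact h
end

section
/- A ring R is strongly nil-clean if and only if 2 is nilpotent in R and R is Yaqub nil-clean. -/
theorem aux_sub (R : Type*) [Ring R] (h2 : IsNilpotent (2 : R)) (a : R)
    (hn : IsNilpotent (a - a ^ 3)) : IsNilpotent (a - a ^ 2) := by
  have h1 : IsNilpotent (a * (a - a ^ 3)) :=
    Commute.isNilpotent_mul_left (by noncomm_ring [Commute, SemiconjBy]) hn
  have h2a : IsNilpotent ((2 : R) * a ^ 4 - 2 * a ^ 3) := by
    have c4 : IsNilpotent ((2 : R) * a ^ 4) :=
      Commute.isNilpotent_mul_right (Commute.ofNat_left 2 _) h2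
    have c3 : IsNilpotent ((2 : R) * a ^ 3) :=
      Commute.isNilpotent_mul_right (Commute.ofNat_left 2 _) h2
    exact Commute.isNilpotent_sub (by noncomm_ring [Commute, SemiconjBy]) c4 c3
  have hsum : IsNilpotent (a * (a - a ^ 3) + ((2 : R) * a ^ 4 - 2 * a ^ 3)) :=
    Commute.isNilpotent_add (by noncomm_ring [Commute, SemiconjBy]) h1 h2a
  have key : (a - a ^ 2) ^ 2 = a * (a - a ^ 3) + ((2 : R) * a ^ 4 - 2 * a ^ 3) := by
    noncomm_ring
  obtain ⟨n, hn'⟩ := key ▸ hsum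
  exact ⟨2 * n, by rw [pow_mul]; exact hn'⟩

theorem stmt11 (R : Type*) [Ring R] :
    (∀ a : R, IsNilpotent (a - a ^ 2)) ↔ IsNilpotent (2 : R) ∧ YaqubNilClean R := by
  constructor
  · intro h
    constructor
    · have := h (-1)
      have h' : ((-1 : R) - (-1) ^ 2) = -2 := by norm_num
      rw [h'] at this
      simpa using this.neg
    · intro a
      right
      have key : a - a ^ 3 = (a - a ^ 2) * (1 + a) := by noncomm_ring
      rw [key]
      exact Commute.isNilpotent_mul_right (by noncomm_ring [Commute, SemiconjBy]) (h a)
  · rintro ⟨h2, hy⟩ a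
    rcases hy a with h | h
    · have hn : IsNilpotent (a - a ^ 3) := by
        have c3 : IsNilpotent ((2 : R) * a ^ 3) :=
          Commute.isNilpotent_mul_right (Commute.ofNat_left 2 _) h2
        have key : a - a ^ 3 = (a + a ^ 3) - 2 * a ^ 3 := by noncomm_ring
        rw [key]
        exact Commute.isNilpotent_sub (by noncomm_ring [Commute, SemiconjBy]) h c3
      exact aux_sub R h2 a hn
    · exact aux_sub R h2 a h
end

section
/- For n ≥ 2, the ring Z/nZ is Yaqub nil-clean if and only if n = 2^k · 3^l · 5^s for nonnegative integers k, l, s with l·s = 0. -/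
lemma nil_key (n : ℕ) [NeZero n] (x c : ℤ) (hc : c ∣ x) (hn : (n:ℤ) ∣ c ^ n) :
    IsNilpotent ((x : ZMod n)) := by
  refine ⟨n, ?_⟩
  rw [← Int.cast_pow]
  exact (ZMod.intCast_zmod_eq_zero_iff_dvd _ _).mpr (hn.trans (pow_dvd_pow_of_dvd hc n))

lemma prime_dvd_of_nil (n : ℕ) [NeZero n] (c : ℤ) (h : IsNilpotent ((c:ℤ) : ZMod n))
    (p : ℕ) (pp : p.Prime) (pd : p ∣ n) : (p:ℤ) ∣ c := by
  obtain ⟨m, hm⟩ := h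
  rw [← Int.cast_pow, ZMod.intCast_zmod_eq_zero_iff_dvd] at hm
  have h2 : (p:ℤ) ∣ c ^ m := dvd_trans (Int.natCast_dvd_natCast.mpr pd) hm
  exact (Nat.prime_iff_prime_int.mp pp).dvd_of_dvd_pow h2

lemma fact235 : ∀ n : ℕ, n ≠ 0 → (∀ p, p.Prime → p ∣ n → p = 2 ∨ p = 3 ∨ p = 5) →
    ∃ k l s : ℕ, n = 2 ^ k * 3 ^ l * 5 ^ s := by
  intro n
  induction n using Nat.strong_induction_on with
  | _ n ih =>
    intro hn hp
    rcases eq_or_ne n 1 with rfl | h1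
    · exact ⟨0, 0, 0, rfl⟩
    · have hpf := Nat.minFac_prime h1
      obtain ⟨m, hm⟩ := Nat.minFac_dvd n
      have hm0 : m ≠ 0 := by rintro rfl; simp at hm; exact hn hm
      have hmlt : m < n := by
        have h2 := hpf.two_le
        have hm1 : 1 ≤ m := Nat.one_le_iff_ne_zero.mpr hm0
        calc m < 2 * m := by omega
          _ ≤ n.minFac * m := Nat.mul_le_mul_right m h2
          _ = n := hm.symm
      obtain ⟨k, l, s, hkls⟩ := ih m hmlt hm0 (fun p pp pd => hp p pp (hm ▸ pd.mul_left _))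
      rcases hp _ hpf (Nat.minFac_dvd n) with h2 | h3 | h5
      · exact ⟨k + 1, l, s, by rw [hm, hkls, h2]; ring⟩
      · exact ⟨k, l + 1, s, by rw [hm, hkls, h3]; ring⟩
      · exact ⟨k, l, s + 1, by rw [hm, hkls, h5]; ring⟩

lemma dvd_pow235 (p q k s : ℕ) (hp : 2 ≤ p) (hq : 2 ≤ q) :
    p ^ k * q ^ s ∣ (p * q) ^ (p ^ k * q ^ s) := by
  rw [mul_pow]
  have hkn : k ≤ p ^ k * q ^ s := by
    have h1 : k < p ^ k := Nat.lt_pow_self hp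
    have h2 : p ^ k ≤ p ^ k * q ^ s := Nat.le_mul_of_pos_right _ (pow_pos (by omega) s)
    omega
  have hsn : s ≤ p ^ k * q ^ s := by
    have h1 : s < q ^ s := Nat.lt_pow_self hq
    have h2 : q ^ s ≤ p ^ k * q ^ s := Nat.le_mul_of_pos_left _ (pow_pos (by omega) k)
    omega
  exact Nat.mul_dvd_mul (pow_dvd_pow p hkn) (pow_dvd_pow q hsn)

theorem stmt12 (n : ℕ) (hn : 2 ≤ n) :
    YaqubNilClean (ZMod n) ↔ ∃ k l s : ℕ, n = 2 ^ k * 3 ^ l * 5 ^ s ∧ l * s = 0 := by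
  haveI : NeZero n := ⟨by omega⟩
  constructor
  · intro h
    have hp235 : ∀ p, p.Prime → p ∣ n → p = 2 ∨ p = 3 ∨ p = 5 := by
      intro p pp pd
      have hple := pp.two_le
      rcases h ((2:ℤ) : ZMod n) with h1 | h1
      · have e : ((2:ℤ):ZMod n) + ((2:ℤ):ZMod n) ^ 3 = ((10:ℤ) : ZMod n) := by
          push_cast; norm_num
        rw [e] at h1
        have hd : (p:ℤ) ∣ 10 := prime_dvd_of_nil n 10 h1 p pp pd
        have hd' : p ∣ 10 := by exact_mod_cast hd
        have := Nat.le_of_dvd (by norm_num) hd'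
        interval_cases p <;> revert hd' pp <;> decide
      · have e : ((2:ℤ):ZMod n) - ((2:ℤ):ZMod n) ^ 3 = ((-6:ℤ) : ZMod n) := by
          push_cast; norm_num
        rw [e] at h1
        have hd : (p:ℤ) ∣ -6 := prime_dvd_of_nil n (-6) h1 p pp pd
        have hd' : p ∣ 6 := by
          have h6 : (p:ℤ) ∣ 6 := by simpa using hd.neg_right
          exact_mod_cast h6
        have := Nat.le_of_dvd (by norm_num) hd'
        interval_cases p <;> revert hd' pp <;> decide
    have h35 : ¬ (3 ∣ n ∧ 5 ∣ n) := by
      rintro ⟨h3, h5⟩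
      rcases h ((7:ℤ) : ZMod n) with h1 | h1
      · have e : ((7:ℤ):ZMod n) + ((7:ℤ):ZMod n) ^ 3 = ((350:ℤ) : ZMod n) := by
          push_cast; norm_num
        rw [e] at h1
        have hd : (3:ℤ) ∣ 350 := by
          have := prime_dvd_of_nil n 350 h1 3 (by norm_num) h3
          exact_mod_cast this
        norm_num at hd
      · have e : ((7:ℤ):ZMod n) - ((7:ℤ):ZMod n) ^ 3 = ((-336:ℤ) : ZMod n) := by
          push_cast; norm_num
        rw [e] at h1
        have hd : (5:ℤ) ∣ -336 := by
          have := prime_dvd_of_nil n (-336) h1 5 (by norm_num) h5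
          exact_mod_cast this
        norm_num at hd
    obtain ⟨k, l, s, hkls⟩ := fact235 n (by omega) hp235
    refine ⟨k, l, s, hkls, ?_⟩
    by_contra hls
    have hl : l ≠ 0 := by rintro rfl; simp at hls
    have hs : s ≠ 0 := by rintro rfl; simp at hls
    refine h35 ⟨?_, ?_⟩
    · rw [hkls]
      exact dvd_mul_of_dvd_left (dvd_mul_of_dvd_right (dvd_pow_self 3 hl) _) _
    · rw [hkls]
      exact dvd_mul_of_dvd_right (dvd_pow_self 5 hs) _
  · rintro ⟨k, l, s, hkls, hls⟩ a
    set b : ℤ := (a.val : ℤ) with hbdef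
    have hb : ((b : ℤ) : ZMod n) = a := by
      rw [hbdef]
      push_cast
      simp [ZMod.natCast_val, ZMod.cast_id]
    have hplus : a + a ^ 3 = (((b + b ^ 3 : ℤ)) : ZMod n) := by
      rw [← hb]; push_cast; ring
    have hminus : a - a ^ 3 = (((b - b ^ 3 : ℤ)) : ZMod n) := by
      rw [← hb]; push_cast; ring
    rcases Nat.mul_eq_zero.mp hls with hl | hs
    · -- l = 0, n = 2^k * 5^s, use mod 10
      subst hl
      have hn10 : (n:ℤ) ∣ 10 ^ n := by
        have : n ∣ 10 ^ n := by
          have := dvd_pow235 2 5 k s (by norm_num) (by norm_num)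
          simpa [hkls] using this
        exact_mod_cast this
      have h10 : ∀ x : ZMod 10, x + x ^ 3 = 0 ∨ x - x ^ 3 = 0 := by decide
      rcases h10 ((b : ZMod 10)) with hx | hx
      · left
        rw [hplus]
        refine nil_key n _ 10 ?_ hn10
        have h0 : ((b + b ^ 3 : ℤ) : ZMod 10) = 0 := by push_cast; exact hx
        exact_mod_cast (ZMod.intCast_zmod_eq_zero_iff_dvd _ 10).mp h0
      · right
        rw [hminus]
        refine nil_key n _ 10 ?_ hn10
        have h0 : ((b - b ^ 3 : ℤ) : ZMod 10) = 0 := by push_cast; exact hx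
        exact_mod_cast (ZMod.intCast_zmod_eq_zero_iff_dvd _ 10).mp h0
    · -- s = 0, n = 2^k * 3^l, use mod 6
      subst hs
      right
      rw [hminus]
      have hn6 : (n:ℤ) ∣ 6 ^ n := by
        have : n ∣ 6 ^ n := by
          have := dvd_pow235 2 3 k l (by norm_num) (by norm_num)
          simpa [hkls] using this
        exact_mod_cast this
      refine nil_key n _ 6 ?_ hn6
      have h6 : ∀ x : ZMod 6, x - x ^ 3 = 0 := by decide
      have h0 : ((b - b ^ 3 : ℤ) : ZMod 6) = 0 := by push_cast; exact h6 _
      exact_mod_cast (ZMod.intCast_zmod_eq_zero_iff_dvd _ 6).mp h0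
end

section
/- Let R be a ring in which 5 is nilpotent, and let a ∈ R with a + a^3 nilpotent. Then there exists an element e in the subring generated by a (the image of an integer polynomial evaluated at a) such that a - e is nilpotent and e^3 = 4e. -/
private lemma newton_step {S : Type*} [CommRing S] :
    ∀ n : ℕ, ∀ x : S, (x ^ 3 - 4 * x) ^ n = 0 → IsUnit (3 * x ^ 2 - 4) →
      ∃ e : S, IsNilpotent (x - e) ∧ e ^ 3 = 4 * e := by
  intro n
  induction n using Nat.strong_induction_on with
  | _ n ih =>
    match n with
    | 0 =>
      intro x h0 _
      have h1 : (1 : S) = 0 := by simpa using h0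
      haveI := subsingleton_of_zero_eq_one h1.symm
      exact ⟨x, ⟨0, Subsingleton.elim _ _⟩, Subsingleton.elim _ _⟩
    | 1 =>
      intro x h0 _
      have h1 : x ^ 3 - 4 * x = 0 := by simpa using h0
      exact ⟨x, ⟨1, by simp⟩, by linear_combination h1⟩
    | (n + 2) =>
      intro x h0 hu
      obtain ⟨v, hv⟩ := hu
      set u : S := ↑v⁻¹ with hu_def
      have hvu : (3 * x ^ 2 - 4) * u = 1 := by rw [← hv]; exact v.mul_inv
      set d : S := (x ^ 3 - 4 * x) * u with hd_def
      set y : S := x - d with hy_def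
      have hfy : y ^ 3 - 4 * y =
          (x ^ 3 - 4 * x) ^ 2 * (u ^ 2 * (3 * x - d)) := by
        rw [hy_def, hd_def]
        linear_combination (4 * x - x ^ 3) * hvu
      have h1 : (y ^ 3 - 4 * y) ^ (n + 1) = 0 := by
        rw [hfy, mul_pow, ← pow_mul]
        have h2 : (x ^ 3 - 4 * x) ^ (2 * (n + 1)) = 0 := by
          rw [show 2 * (n + 1) = (n + 2) + n by ring, pow_add, h0, zero_mul]
        rw [h2, zero_mul]
      have hdnil : IsNilpotent d := ⟨n + 2, by rw [hd_def, mul_pow, h0, zero_mul]⟩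
      have hu' : IsUnit (3 * y ^ 2 - 4) := by
        have heq : 3 * y ^ 2 - 4 = (3 * (y - x) * (y + x)) + (3 * x ^ 2 - 4) := by ring
        rw [heq]
        have hyx : IsNilpotent (y - x) := by
          have h3 : y - x = -d := by rw [hy_def]; ring
          rw [h3]; exact hdnil.neg
        have hnil2 : IsNilpotent (3 * (y - x) * (y + x)) :=
          (Commute.all _ _).isNilpotent_mul_right
            ((Commute.all _ _).isNilpotent_mul_left hyx)
        exact hnil2.isUnit_add_right_of_commute ⟨v, hv⟩ (Commute.all _ _)
      obtain ⟨e, he1, he2⟩ := ih (n + 1) (by omega) y h1 hu'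
      refine ⟨e, ?_, he2⟩
      have : x - e = d + (y - e) := by rw [hy_def]; ring
      rw [this]
      exact (Commute.all _ _).isNilpotent_add hdnil he1

theorem stmt13 (R : Type*) [Ring R] (h5 : IsNilpotent (5 : R)) (a : R)
    (ha : IsNilpotent (a + a ^ 3)) :
    ∃ e : R, (∃ p : Polynomial ℤ, e = Polynomial.aeval a p) ∧
      IsNilpotent (a - e) ∧ e ^ 3 = 4 * e := by
  let S := Algebra.adjoin ℤ ({a} : Set R)
  letI : CommRing S := Algebra.adjoinCommRingOfComm ℤ (by
    rintro x hx y hy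
    simp only [Set.mem_singleton_iff] at hx hy
    subst hx; subst hy; rfl)
  set x : S := ⟨a, Algebra.subset_adjoin (Set.mem_singleton a)⟩ with hx_def
  have h5S : IsNilpotent (5 : S) := by
    obtain ⟨k, hk⟩ := h5
    exact ⟨k, Subtype.ext (by push_cast; exact hk)⟩
  have haS : IsNilpotent (x + x ^ 3 : S) := by
    obtain ⟨k, hk⟩ := ha
    exact ⟨k, Subtype.ext (by push_cast; exact hk)⟩
  have hfnil : IsNilpotent (x ^ 3 - 4 * x : S) := by
    have heq : x ^ 3 - 4 * x = (x + x ^ 3) - 5 * x := by ring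
    rw [heq]
    exact (Commute.all _ _).isNilpotent_sub haS
      ((Commute.all _ _).isNilpotent_mul_right h5S)
  have hunit : IsUnit (3 * x ^ 2 - 4 : S) := by
    have key : (3 * x ^ 2 - 4) * (4 * x ^ 2 + 1)
        = (12 * x * (x + x ^ 3) + (-(5 * (5 * x ^ 2)) + -5)) + 1 := by ring
    have hnil : IsNilpotent (12 * x * (x + x ^ 3) + (-(5 * (5 * x ^ 2)) + -5) : S) := by
      refine (Commute.all _ _).isNilpotent_add
        ((Commute.all _ _).isNilpotent_mul_left haS) ?_
      exact (Commute.all _ _).isNilpotent_add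
        ((Commute.all _ _).isNilpotent_mul_right h5S).neg h5S.neg
    have : IsUnit ((3 * x ^ 2 - 4) * (4 * x ^ 2 + 1) : S) := by
      rw [key]
      exact hnil.isUnit_add_right_of_commute isUnit_one (Commute.all _ _)
    exact isUnit_of_mul_isUnit_left this
  obtain ⟨m, hm⟩ := hfnil
  obtain ⟨e, he1, he2⟩ := newton_step m x hm hunit
  refine ⟨(e : R), ?_, ?_, ?_⟩
  · have hmem : (e : R) ∈ Algebra.adjoin ℤ ({a} : Set R) := e.2
    rw [Algebra.adjoin_singleton_eq_range_aeval] at hmem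
    obtain ⟨p, hp⟩ := hmem
    exact ⟨p, hp.symm⟩
  · obtain ⟨k, hk⟩ := he1
    refine ⟨k, ?_⟩
    have := congrArg (Subtype.val) hk
    push_cast at this
    simpa using this
  · have := congrArg (Subtype.val) he2
    push_cast at this
    have h4 : ((4 : S) : R) = 4 := rfl
    simpa [h4] using this
end

section
/- Let R be a ring in which 5 is nilpotent and a ∈ R. Then a + a^3 is nilpotent if and only if there exists e ∈ R with e^3 = e, a·e = e·a, and a + 3e nilpotent. -/
private lemma unit_aux {S : Type*} [CommRing S] (h5 : IsNilpotent (5 : S)) (x : S)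
    (hx : IsNilpotent (x ^ 3 - x)) : IsUnit (3 * x ^ 2 - 1) := by
  have h6 : IsUnit (6 : S) := by
    have : (6 : S) = 1 + 5 := by norm_num
    rw [this]; exact h5.isUnit_one_add
  have h2 : IsUnit (2 : S) := isUnit_of_mul_isUnit_left (y := 3) (by norm_num at h6 ⊢; exact h6)
  have hnil : IsNilpotent (9 * x * (x ^ 3 - x)) :=
    (Commute.all _ _).isNilpotent_mul_left hx
  have : IsUnit ((3 * x ^ 2 - 1) * (3 * x ^ 2 - 2)) := by
    have key : (3 * x ^ 2 - 1) * (3 * x ^ 2 - 2) = 2 + 9 * x * (x ^ 3 - x) := by ring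
    rw [key]
    exact hnil.isUnit_add_left_of_commute h2 (Commute.all _ _)
  exact isUnit_of_mul_isUnit_left this

private lemma newton {S : Type*} [CommRing S] (h5 : IsNilpotent (5 : S)) :
    ∀ (m : ℕ) (x : S), (x ^ 3 - x) ^ (2 ^ m) = 0 → ∃ e, e ^ 3 = e ∧ IsNilpotent (e - x) := by
  intro m
  induction m with
  | zero =>
    intro x hx
    simp only [pow_zero, pow_one] at hx
    exact ⟨x, by linear_combination hx, by simp⟩
  | succ m ih =>
    intro x hx
    set n : S := x ^ 3 - x with hn
    have hnnil : IsNilpotent n := ⟨_, hx⟩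
    obtain ⟨u, hu⟩ := (unit_aux h5 x hnnil).exists_right_inv
    set x' : S := x - n * u with hx'
    have hstep : x' ^ 3 - x' = n ^ 2 * (3 * x * u ^ 2 - n * u ^ 3) := by
      rw [hx', hn]
      linear_combination (x - x ^ 3) * hu
    have hx'2 : (x' ^ 3 - x') ^ (2 ^ m) = 0 := by
      rw [hstep, mul_pow, ← pow_mul]
      have h2 : 2 * 2 ^ m = 2 ^ (m + 1) := by rw [pow_succ]; ring
      rw [h2, hx, zero_mul]
    obtain ⟨e, he, hex'⟩ := ih x' hx'2
    refine ⟨e, he, ?_⟩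
    have h1 : IsNilpotent (x' - x) := by
      rw [hx']
      simpa using ((Commute.all n u).isNilpotent_mul_right hnnil).neg
    have := (Commute.all (e - x') (x' - x)).isNilpotent_add hex' h1
    simpa using this

private lemma fwd {S : Type*} [CommRing S] (h5 : IsNilpotent (5 : S)) (a : S)
    (ha : IsNilpotent (a + a ^ 3)) :
    ∃ e : S, e ^ 3 = e ∧ IsNilpotent (a + 3 * e) := by
  have hnx : IsNilpotent ((-2 * a) ^ 3 - (-2 * a)) := by
    have h1 : IsNilpotent ((-8 : S) * (a + a ^ 3)) := (Commute.all _ _).isNilpotent_mul_left ha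
    have h2 : IsNilpotent ((5 : S) * (2 * a)) := (Commute.all _ _).isNilpotent_mul_right h5
    have heq : (-2 * a) ^ 3 - (-2 * a) = (-8 : S) * (a + a ^ 3) + 5 * (2 * a) := by ring
    rw [heq]
    exact (Commute.all _ _).isNilpotent_add h1 h2
  obtain ⟨k, hk⟩ := hnx
  have hk2 : ((-2 * a) ^ 3 - (-2 * a)) ^ (2 ^ k) = 0 :=
    pow_eq_zero_of_le (Nat.le_of_lt (Nat.lt_two_pow_self (n := k))) hk
  obtain ⟨e, he3, hex⟩ := newton h5 k (-2 * a) hk2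
  refine ⟨e, he3, ?_⟩
  have h1 : IsNilpotent ((3 : S) * (e - -2 * a)) := (Commute.all _ _).isNilpotent_mul_left hex
  have h2 : IsNilpotent ((5 : S) * (-a)) := (Commute.all _ _).isNilpotent_mul_right h5
  have heq : a + 3 * e = 3 * (e - -2 * a) + 5 * (-a) := by ring
  rw [heq]
  exact (Commute.all _ _).isNilpotent_add h1 h2

private lemma bwd {S : Type*} [CommRing S] (h5 : IsNilpotent (5 : S)) (a e : S)
    (he3 : e ^ 3 = e) (hb : IsNilpotent (a + 3 * e)) : IsNilpotent (a + a ^ 3) := by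
  set b : S := a + 3 * e with hbdef
  have key : a + a ^ 3 = b * (1 + b ^ 2 - 9 * (b * e) + 27 * e ^ 2) + 5 * ((-6) * e) := by
    rw [hbdef]
    linear_combination (-27 : S) * he3
  rw [key]
  have h1 : IsNilpotent (b * (1 + b ^ 2 - 9 * (b * e) + 27 * e ^ 2)) :=
    (Commute.all _ _).isNilpotent_mul_right hb
  have h2 : IsNilpotent ((5 : S) * ((-6) * e)) := (Commute.all _ _).isNilpotent_mul_right h5
  exact (Commute.all _ _).isNilpotent_add h1 h2

private lemma fwdR {R : Type*} [Ring R] (h5 : IsNilpotent (5 : R)) (a : R)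
    (ha : IsNilpotent (a + a ^ 3)) :
    ∃ e : R, e ^ 3 = e ∧ a * e = e * a ∧ IsNilpotent (a + 3 * e) := by
  letI : CommRing (Algebra.adjoin ℤ ({a} : Set R)) :=
    Algebra.adjoinCommRingOfComm ℤ (by rintro x rfl y rfl; rfl)
  have haS : a ∈ Algebra.adjoin ℤ ({a} : Set R) := Algebra.subset_adjoin rfl
  have hmul : ∀ z w : Algebra.adjoin ℤ ({a} : Set R), ((z * w : _) : R) = (z : R) * (w : R) :=
    fun _ _ => rfl
  have hadd : ∀ z w : Algebra.adjoin ℤ ({a} : Set R), ((z + w : _) : R) = (z : R) + (w : R) :=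
    fun _ _ => rfl
  have hone : ((1 : Algebra.adjoin ℤ ({a} : Set R)) : R) = 1 := rfl
  have hzero : ((0 : Algebra.adjoin ℤ ({a} : Set R)) : R) = 0 := rfl
  have hpow : ∀ (z : Algebra.adjoin ℤ ({a} : Set R)) (k : ℕ), ((z ^ k : _) : R) = (z : R) ^ k := by
    intro z k
    induction k with
    | zero => rw [pow_zero, pow_zero]; exact hone
    | succ k ih => rw [pow_succ, pow_succ, hmul, ih]
  have hdown : ∀ z : Algebra.adjoin ℤ ({a} : Set R), IsNilpotent (z : R) → IsNilpotent z := by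
    rintro z ⟨k, hk⟩
    exact ⟨k, Subtype.ext (by rw [hpow, hk]; exact hzero.symm)⟩
  have hup : ∀ z : Algebra.adjoin ℤ ({a} : Set R), IsNilpotent z → IsNilpotent (z : R) := by
    rintro z ⟨k, hk⟩
    refine ⟨k, ?_⟩
    rw [← hpow, hk]
    exact hzero
  have h5S : IsNilpotent (5 : Algebra.adjoin ℤ ({a} : Set R)) := by
    apply hdown
    have : ((5 : Algebra.adjoin ℤ ({a} : Set R)) : R) = 5 := rfl
    rw [this]; exact h5
  have haN : IsNilpotent ((⟨a, haS⟩ : Algebra.adjoin ℤ ({a} : Set R)) +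
      (⟨a, haS⟩ : Algebra.adjoin ℤ ({a} : Set R)) ^ 3) := by
    apply hdown
    rw [hadd, hpow]
    exact ha
  obtain ⟨e, he3, hne⟩ := fwd h5S (⟨a, haS⟩ : Algebra.adjoin ℤ ({a} : Set R)) haN
  refine ⟨(e : R), ?_, ?_, ?_⟩
  · have := congrArg Subtype.val he3
    rwa [← hpow]
  · have := congrArg Subtype.val (mul_comm (⟨a, haS⟩ : Algebra.adjoin ℤ ({a} : Set R)) e)
    rwa [hmul, hmul] at this
  · have := hup _ hne
    rwa [hadd, hmul, show ((3 : Algebra.adjoin ℤ ({a} : Set R)) : R) = 3 from rfl] at this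

private lemma bwdR {R : Type*} [Ring R] (h5 : IsNilpotent (5 : R)) (a e : R)
    (he3 : e ^ 3 = e) (hae : a * e = e * a) (hb : IsNilpotent (a + 3 * e)) :
    IsNilpotent (a + a ^ 3) := by
  letI : CommRing (Algebra.adjoin ℤ ({a, e} : Set R)) :=
    Algebra.adjoinCommRingOfComm ℤ (by
      rintro x (rfl | rfl) y (rfl | rfl)
      · rfl
      · exact hae
      · exact hae.symm
      · rfl)
  have haS : a ∈ Algebra.adjoin ℤ ({a, e} : Set R) := Algebra.subset_adjoin (Or.inl rfl)
  have heS : e ∈ Algebra.adjoin ℤ ({a, e} : Set R) := Algebra.subset_adjoin (Or.inr rfl)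
  have hmul : ∀ z w : Algebra.adjoin ℤ ({a, e} : Set R), ((z * w : _) : R) = (z : R) * (w : R) :=
    fun _ _ => rfl
  have hadd : ∀ z w : Algebra.adjoin ℤ ({a, e} : Set R), ((z + w : _) : R) = (z : R) + (w : R) :=
    fun _ _ => rfl
  have hone : ((1 : Algebra.adjoin ℤ ({a, e} : Set R)) : R) = 1 := rfl
  have hzero : ((0 : Algebra.adjoin ℤ ({a, e} : Set R)) : R) = 0 := rfl
  have hpow : ∀ (z : Algebra.adjoin ℤ ({a, e} : Set R)) (k : ℕ),
      ((z ^ k : _) : R) = (z : R) ^ k := by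
    intro z k
    induction k with
    | zero => rw [pow_zero, pow_zero]; exact hone
    | succ k ih => rw [pow_succ, pow_succ, hmul, ih]
  have hdown : ∀ z : Algebra.adjoin ℤ ({a, e} : Set R), IsNilpotent (z : R) → IsNilpotent z := by
    rintro z ⟨k, hk⟩
    exact ⟨k, Subtype.ext (by rw [hpow, hk]; exact hzero.symm)⟩
  have hup : ∀ z : Algebra.adjoin ℤ ({a, e} : Set R), IsNilpotent z → IsNilpotent (z : R) := by
    rintro z ⟨k, hk⟩
    refine ⟨k, ?_⟩
    rw [← hpow, hk]
    exact hzero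
  have h5S : IsNilpotent (5 : Algebra.adjoin ℤ ({a, e} : Set R)) := by
    apply hdown
    have : ((5 : Algebra.adjoin ℤ ({a, e} : Set R)) : R) = 5 := rfl
    rw [this]; exact h5
  have he3S : (⟨e, heS⟩ : Algebra.adjoin ℤ ({a, e} : Set R)) ^ 3 = ⟨e, heS⟩ :=
    Subtype.ext (by rw [hpow]; exact he3)
  have hbS : IsNilpotent ((⟨a, haS⟩ : Algebra.adjoin ℤ ({a, e} : Set R)) + 3 * ⟨e, heS⟩) := by
    apply hdown
    rw [hadd, hmul, show ((3 : Algebra.adjoin ℤ ({a, e} : Set R)) : R) = 3 from rfl]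
    exact hb
  have := hup _ (bwd h5S _ _ he3S hbS)
  rwa [hadd, hpow] at this

theorem stmt14 (R : Type*) [Ring R] (h5 : IsNilpotent (5 : R)) (a : R) :
    IsNilpotent (a + a ^ 3) ↔
      ∃ e : R, e ^ 3 = e ∧ a * e = e * a ∧ IsNilpotent (a + 3 * e) := by
  constructor
  · exact fwdR h5 a
  · rintro ⟨e, he3, hae, hb⟩
    exact bwdR h5 a e he3 hae hb
end

section
/- Every subring of a Hirano ring is a Hirano ring. -/
def HiranoRing (R : Type*) [Ring R] : Prop :=
  ∀ u : Rˣ, IsNilpotent (1 + (u : R) ^ 2) ∨ IsNilpotent (1 - (u : R) ^ 2)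

theorem stmt16 (R : Type*) [Ring R] (h : HiranoRing R) (S : Subring R) :
    HiranoRing S := by
  intro u
  -- map the unit to R
  let v : Rˣ := Units.map S.subtype.toMonoidHom u
  have hv : (v : R) = ((u : S) : R) := rfl
  rcases h v with ⟨n, hn⟩ | ⟨n, hn⟩
  · left
    exact ⟨n, by
      have : ((1 + (u : S) ^ 2) ^ n : S) = (0 : S) := by
        apply Subtype.ext
        push_cast
        rw [← hv]
        exact_mod_cast hn
      exact this⟩
  · right
    exact ⟨n, by
      have : ((1 - (u : S) ^ 2) ^ n : S) = (0 : S) := by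
        apply Subtype.ext
        push_cast
        rw [← hv]
        exact_mod_cast hn
      exact this⟩
end

section
/- The ring Z/5Z × Z/5Z is not a Hirano ring, although Z/5Z is a Hirano ring. -/
theorem stmt17 : ¬ HiranoRing (ZMod 5 × ZMod 5) ∧ HiranoRing (ZMod 5) := by
  have key : ∀ x : ZMod 5, x ≠ 0 → x = 1 ∨ x = 2 ∨ x = 3 ∨ x = 4 := by decide
  have h2ne : (2 : ZMod 5) ≠ 0 := by decide
  have h3ne : ((1 : ZMod 5) - 2 ^ 2) ≠ 0 := by decide
  have e1 : (1 : ZMod 5) - 1 ^ 2 = 0 := by decide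
  have e2 : (1 : ZMod 5) + 2 ^ 2 = 0 := by decide
  have e3 : (1 : ZMod 5) + 3 ^ 2 = 0 := by decide
  have e4 : (1 : ZMod 5) - 4 ^ 2 = 0 := by decide
  have v1 : ((1, 2) : ZMod 5 × ZMod 5) * (1, 3) = 1 := by constructor
  have v2 : ((1, 3) : ZMod 5 × ZMod 5) * (1, 2) = 1 := by constructor
  haveI : Fact (Nat.Prime 5) := ⟨by norm_num⟩
  constructor
  · intro h
    have := h ⟨(1, 2), (1, 3), v1, v2⟩
    rcases this with h1 | h1
    · have h2 : IsNilpotent ((1 : ZMod 5 × ZMod 5) + (1, 2) ^ 2).1 := h1.map (RingHom.fst _ _)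
      have hz : ((1 : ZMod 5 × ZMod 5) + (1, 2) ^ 2).1 = 0 := IsNilpotent.eq_zero h2
      simp only [Prod.fst_add, Prod.pow_fst, Prod.fst_one] at hz
      exact h2ne (by linear_combination hz)
    · have h2 : IsNilpotent ((1 : ZMod 5 × ZMod 5) - (1, 2) ^ 2).2 := h1.map (RingHom.snd _ _)
      have hz : ((1 : ZMod 5 × ZMod 5) - (1, 2) ^ 2).2 = 0 := IsNilpotent.eq_zero h2
      simp only [Prod.snd_sub, Prod.pow_snd, Prod.snd_one] at hz
      exact h3ne hz
  · intro u
    rcases key _ u.ne_zero with h | h | h | h <;> rw [h]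
    · right; exact ⟨1, by rw [pow_one, e1]⟩
    · left; exact ⟨1, by rw [pow_one, e2]⟩
    · left; exact ⟨1, by rw [pow_one, e3]⟩
    · right; exact ⟨1, by rw [pow_one, e4]⟩
end
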